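/- Let F be a closed subset of a locally compact metric space M. Then every bounded, uniformly continuous function f : F → ℝ is the restriction to F of a bounded, uniformly continuous function g : M → ℝ. (Equivalently, the restriction map UC_b(M) → UC_b(F) is surjective.) -/

import Mathlib

/-- A uniform approximation (in sup-distance) by uniformly continuous real functions is
uniformly continuous. -/
lemma stmt7_uc_of_unif_approx {M : Type*} [MetricSpace M] {g : M → ℝ}
    (h : ∀ ε > (0:ℝ), ∃ G : M → ℝ, UniformContinuous G ∧ ∀ x, |g x - G x| ≤ ε) :
    UniformContinuous g := by
  rw [Metric.uniformContinuous_iff]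
  intro ε hε
  obtain ⟨G, hG, hGa⟩ := h (ε/4) (by positivity)
  obtain ⟨δ, hδ, hd⟩ := Metric.uniformContinuous_iff.mp hG (ε/4) (by positivity)
  refine ⟨δ, hδ, fun {a b} hab => ?_⟩
  have h1 := hGa a
  have h2 := hGa b
  have h3 : dist (G a) (G b) < ε/4 := hd hab
  rw [Real.dist_eq] at h3 ⊢
  rw [abs_lt] at h3 ⊢
  rw [abs_le] at h1 h2
  constructor <;> nlinarith [h1.1, h1.2, h2.1, h2.2, h3.1, h3.2]

lemma stmt7_uc_finsum {M : Type*} [MetricSpace M] (h : ℕ → M → ℝ)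
    (hh : ∀ k, UniformContinuous (h k)) (N : ℕ) :
    UniformContinuous (fun x => ∑ k ∈ Finset.range N, h k x) := by
  induction N with
  | zero => simpa using uniformContinuous_const
  | succ n ih =>
      simp only [Finset.sum_range_succ]
      exact ih.add (hh n)

/-- Let `F` be a closed subset of a locally compact metric space `M`.
Then every bounded, uniformly continuous function `f : F → ℝ` extends to a bounded,
uniformly continuous function `g : M → ℝ`. -/
theorem stmt_7 {M : Type*} [MetricSpace M] [LocallyCompactSpace M]
    (F : Set M) (hF : IsClosed F) (f : F → ℝ)
    (hfU : UniformContinuous f) (hfB : ∃ C : ℝ, ∀ x : F, |f x| ≤ C) :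
    ∃ g : M → ℝ, UniformContinuous g ∧ (∃ C : ℝ, ∀ x : M, |g x| ≤ C) ∧
      ∀ x : F, g x = f x := by
  classical
  rcases F.eq_empty_or_nonempty with hFe | hne
  · refine ⟨fun _ => 0, uniformContinuous_const, ⟨0, fun x => by simp⟩, fun x => ?_⟩
    exact absurd x.2 (by simp [hFe])
  haveI : Nonempty F := hne.to_subtype
  obtain ⟨C, hC⟩ := hfB
  set C₀ : ℝ := max C 0 with hC₀def
  have hC₀ : 0 ≤ C₀ := le_max_right _ _
  have hfC : ∀ x : F, |f x| ≤ C₀ := fun x => (hC x).trans (le_max_left _ _)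
  have hUC : ∀ k : ℕ, ∃ δ > (0:ℝ), ∀ a b : F, dist a b < δ → |f a - f b| < (1/2)^k := by
    intro k
    obtain ⟨δ, hδ, hd⟩ := Metric.uniformContinuous_iff.mp hfU ((1/2)^k) (by positivity)
    exact ⟨δ, hδ, fun a b hab => by have := hd hab; rwa [Real.dist_eq] at this⟩
  choose δ hδpos hδ using hUC
  set K : ℕ → ℝ := fun k => 2 * C₀ / δ k with hKdef
  have hK0 : ∀ k, 0 ≤ K k := fun k => div_nonneg (by linarith) (hδpos k).le
  set u : ℕ → M → ℝ := fun k x => ⨅ y : F, (f y + K k * dist x y) with hudef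
  have hbdd : ∀ k (x : M), BddBelow (Set.range fun y : F => f y + K k * dist x y) := by
    intro k x
    refine ⟨-C₀, fun t ht => ?_⟩
    obtain ⟨y, hy⟩ := ht
    have h1 : -C₀ ≤ f y := neg_le_of_abs_le (hfC y)
    have h2 : 0 ≤ K k * dist x (y:M) := mul_nonneg (hK0 k) dist_nonneg
    rw [← hy]; dsimp only; linarith
  have hule : ∀ k (x : F), u k x ≤ f x := by
    intro k x
    have := ciInf_le (hbdd k (x:M)) x
    simpa using this
  have huge : ∀ k (x : F), f x - (1/2)^k ≤ u k x := by
    intro k x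
    refine le_ciInf fun y => ?_
    rcases lt_or_ge (dist (x:M) (y:M)) (δ k) with hlt | hge
    · have hxy : dist x y < δ k := by rwa [Subtype.dist_eq]
      have h1 := hδ k x y hxy
      have h2 : 0 ≤ K k * dist (x:M) (y:M) := mul_nonneg (hK0 k) dist_nonneg
      have h3 : f x - f y ≤ |f x - f y| := le_abs_self _
      linarith [h1.le]
    · have h1 : K k * δ k ≤ K k * dist (x:M) (y:M) := mul_le_mul_of_nonneg_left hge (hK0 k)
      have h2 : K k * δ k = 2 * C₀ := by
        show 2 * C₀ / δ k * δ k = 2 * C₀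
        exact div_mul_cancel₀ _ (hδpos k).ne'
      have h3 : -C₀ ≤ f y := neg_le_of_abs_le (hfC y)
      have h4 : f x ≤ C₀ := le_of_abs_le (hfC x)
      have h5 : (0:ℝ) < (1/2)^k := by positivity
      linarith
  have hulip : ∀ k (x x' : M), u k x ≤ u k x' + K k * dist x x' := by
    intro k x x'
    have key : ∀ y : F, u k x - K k * dist x x' ≤ f y + K k * dist x' y := by
      intro y
      have h1 : u k x ≤ f y + K k * dist x (y:M) := ciInf_le (hbdd k x) y
      have h2 : dist x (y:M) ≤ dist x x' + dist x' (y:M) := dist_triangle _ _ _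
      have h3 : K k * dist x (y:M) ≤ K k * (dist x x' + dist x' (y:M)) :=
        mul_le_mul_of_nonneg_left h2 (hK0 k)
      nlinarith
    have := le_ciInf key
    linarith
  have huUC : ∀ k, UniformContinuous (u k) := by
    intro k
    rw [Metric.uniformContinuous_iff]
    intro ε hε
    have hK1 : (0:ℝ) < K k + 1 := by linarith [hK0 k]
    refine ⟨ε / (K k + 1), by positivity, fun {a b} hab => ?_⟩
    have h1 := hulip k a b
    have h2 := hulip k b a
    rw [dist_comm] at h2
    rw [Real.dist_eq, abs_lt]
    have h3 : K k * dist a b ≤ K k * (ε / (K k + 1)) :=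
      mul_le_mul_of_nonneg_left hab.le (hK0 k)
    have h4 : K k * (ε / (K k + 1)) < ε := by
      rw [mul_div_assoc'] at *
      rw [div_lt_iff₀ hK1]
      nlinarith [hK0 k]
    constructor <;> nlinarith
  set B : ℕ → ℝ := fun k => 2 * (1/2)^k with hBdef
  have hBpos : ∀ k, 0 < B k := fun k => by positivity
  set h : ℕ → M → ℝ := fun k x => max (-(B k)) (min (B k) (u (k+1) x - u k x)) with hhdef
  have hhle : ∀ k x, |h k x| ≤ B k := by
    intro k x
    rw [abs_le]
    exact ⟨le_max_left _ _, max_le (by linarith [hBpos k]) (min_le_left _ _)⟩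
  have hhF : ∀ k (x : F), h k x = u (k+1) x - u k x := by
    intro k x
    have hp : ((1:ℝ)/2)^(k+1) ≤ (1/2)^k := by
      apply pow_le_pow_of_le_one <;> norm_num
    have hq : (0:ℝ) < (1/2)^k := by positivity
    have a1 := hule (k+1) x
    have a2 := huge (k+1) x
    have a3 := hule k x
    have a4 := huge k x
    have h1 : -(B k) ≤ u (k+1) (x:M) - u k (x:M) := by
      simp only [hBdef]; linarith
    have h2 : u (k+1) (x:M) - u k (x:M) ≤ B k := by
      simp only [hBdef]; linarith
    simp only [hhdef]
    rw [min_eq_right h2, max_eq_right h1]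
  have hhUC : ∀ k, UniformContinuous (h k) := by
    intro k
    have hsub : UniformContinuous fun x => u (k+1) x - u k x := (huUC (k+1)).sub (huUC k)
    exact (((LipschitzWith.id.const_min (B k)).const_max (-(B k))).uniformContinuous).comp hsub
  have hBsum : Summable B := summable_geometric_two.mul_left 2
  have hhsum : ∀ x, Summable fun k => h k x := fun x =>
    Summable.of_norm_bounded hBsum (fun k => by rw [Real.norm_eq_abs]; exact hhle k x)
  set g₀ : M → ℝ := fun x => u 0 x + ∑' k, h k x with hg₀def
  have hg₀F : ∀ x : F, g₀ x = f x := by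
    intro x
    have htend := (hhsum (x:M)).hasSum.tendsto_sum_nat
    have heq : ∀ Kn : ℕ, ∑ k ∈ Finset.range Kn, h k (x:M) = u Kn (x:M) - u 0 (x:M) := by
      intro Kn
      rw [Finset.sum_congr rfl (fun k _ => hhF k x)]
      exact Finset.sum_range_sub (fun k => u k (x:M)) Kn
    have htend2 : Filter.Tendsto (fun n => u n (x:M)) Filter.atTop (nhds (f x)) := by
      rw [Metric.tendsto_atTop]
      intro ε hε
      obtain ⟨N, hN⟩ := exists_pow_lt_of_lt_one hε (by norm_num : (1:ℝ)/2 < 1)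
      refine ⟨N, fun n hn => ?_⟩
      rw [Real.dist_eq, abs_lt]
      have a1 := hule n x
      have a2 := huge n x
      have hp : ((1:ℝ)/2)^n ≤ (1/2)^N := pow_le_pow_of_le_one (by norm_num) (by norm_num) hn
      constructor <;> nlinarith [pow_pos (show (0:ℝ) < 1/2 by norm_num) n]
    have htend3 : Filter.Tendsto (fun Kn => ∑ k ∈ Finset.range Kn, h k (x:M))
        Filter.atTop (nhds (f x - u 0 (x:M))) := by
      simp only [heq]
      exact htend2.sub tendsto_const_nhds
    have huniq := tendsto_nhds_unique htend htend3
    simp only [hg₀def]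
    rw [huniq]; ring
  have hg₀UC : UniformContinuous g₀ := by
    apply stmt7_uc_of_unif_approx
    intro ε hε
    obtain ⟨N, hN⟩ := exists_pow_lt_of_lt_one (show (0:ℝ) < ε/4 by positivity)
      (by norm_num : (1:ℝ)/2 < 1)
    refine ⟨fun x => u 0 x + ∑ k ∈ Finset.range N, h k x,
      (huUC 0).add (stmt7_uc_finsum h hhUC N), fun x => ?_⟩
    have hsplit := ((hhsum x).sum_add_tsum_nat_add N).symm
    have h1 : g₀ x - (u 0 x + ∑ k ∈ Finset.range N, h k x) = ∑' k, h (k + N) x := by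
      simp only [hg₀def]
      rw [hsplit]; ring
    rw [h1]
    have hs : Summable fun k => ‖h (k + N) x‖ :=
      Summable.of_nonneg_of_le (fun k => norm_nonneg _)
        (fun k => by rw [Real.norm_eq_abs]; exact hhle _ x)
        ((summable_nat_add_iff N).mpr hBsum)
    have h2 : |∑' k, h (k + N) x| ≤ ∑' k, B (k + N) := by
      calc |∑' k, h (k + N) x| = ‖∑' k, h (k + N) x‖ := (Real.norm_eq_abs _).symm
        _ ≤ ∑' k, ‖h (k + N) x‖ := norm_tsum_le_tsum_norm hs
        _ ≤ ∑' k, B (k + N) :=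
            Summable.tsum_le_tsum (fun k => by rw [Real.norm_eq_abs]; exact hhle _ x) hs
              ((summable_nat_add_iff N).mpr hBsum)
    have h3 : ∑' k, B (k + N) = 4 * (1/2)^N := by
      have : (fun k : ℕ => B (k + N)) = fun k : ℕ => (2 * (1/2)^N) * (1/2)^k := by
        funext k
        simp only [hBdef, pow_add]
        ring
      rw [this, tsum_mul_left, tsum_geometric_two]
      ring
    rw [h3] at h2
    linarith
  refine ⟨fun x => max (-C₀) (min C₀ (g₀ x)), ?_, ⟨C₀, fun x => ?_⟩, fun x => ?_⟩
  · exact (((LipschitzWith.id.const_min C₀).const_max (-C₀)).uniformContinuous).comp hg₀UC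
  · rw [abs_le]
    exact ⟨le_max_left _ _, max_le (by linarith) (min_le_left _ _)⟩
  · show max (-C₀) (min C₀ (g₀ (x:M))) = f x
    rw [hg₀F x]
    have h1 := hfC x
    rw [abs_le] at h1
    rw [min_eq_right h1.2, max_eq_right h1.1]
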